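/- arXiv:2102.06456 — 3 statements merged into one kernel-verified Lean document; each statement's English description precedes it below -/
import Mathlib

section
/- Let f be a probability density on a space Y, and for parameters α, β let D_α, D_β : Y → {0,1} be measurable indicator functions. Define the joint likelihoods p_α(y,d) = f(y)·[D_α(y)]^d·[1-D_α(y)]^{1-d} and similarly p_β. Then the Hellinger affinity Σ_{d∈{0,1}} ∫ √(p_α(y,d) p_β(y,d)) f-a.e. equals ∫_{{y : D_α(y)=D_β(y)}} f(y) dy, and hence p_α = p_β as joint densities if and only if D_α = D_β f-almost everywhere. -/
open MeasureTheory

theorem unconditional_likelihood_hellinger_and_equivalence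
    {Y : Type*} [MeasurableSpace Y] (μ : Measure Y) [SigmaFinite μ]
    (f Dα Dβ : Y → ℝ)
    (hf : Measurable f) (hDα : Measurable Dα) (hDβ : Measurable Dβ)
    (hf0 : ∀ y, 0 ≤ f y) (hf1 : ∫ y, f y ∂μ = 1)
    (hDα01 : ∀ y, Dα y = 0 ∨ Dα y = 1) (hDβ01 : ∀ y, Dβ y = 0 ∨ Dβ y = 1) :
    ((∫ y, Real.sqrt ((f y * Dα y) * (f y * Dβ y)) ∂μ) +
       (∫ y, Real.sqrt ((f y * (1 - Dα y)) * (f y * (1 - Dβ y))) ∂μ) =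
      ∫ y in {y | Dα y = Dβ y}, f y ∂μ) ∧
    (((fun y => (f y * Dα y, f y * (1 - Dα y))) =ᵐ[μ]
        (fun y => (f y * Dβ y, f y * (1 - Dβ y)))) ↔
      Dα =ᵐ[μ.withDensity fun y => ENNReal.ofReal (f y)] Dβ) := by
  have hInt : Integrable f μ := by
    by_contra h
    rw [integral_undef h] at hf1
    exact one_ne_zero hf1.symm
  have hS : MeasurableSet {y | Dα y = Dβ y} := measurableSet_eq_fun hDα hDβ
  have key1 : ∀ y, Real.sqrt ((f y * Dα y) * (f y * Dβ y)) = f y * (Dα y * Dβ y) := by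
    intro y
    rcases hDα01 y with h1 | h1 <;> rcases hDβ01 y with h2 | h2 <;>
      simp [h1, h2, Real.sqrt_mul_self (hf0 y)]
  have key2 : ∀ y, Real.sqrt ((f y * (1 - Dα y)) * (f y * (1 - Dβ y))) =
      f y * ((1 - Dα y) * (1 - Dβ y)) := by
    intro y
    rcases hDα01 y with h1 | h1 <;> rcases hDβ01 y with h2 | h2 <;>
      simp [h1, h2, Real.sqrt_mul_self (hf0 y)]
  have hsum : ∀ y, f y * (Dα y * Dβ y) + f y * ((1 - Dα y) * (1 - Dβ y)) =
      Set.indicator {y | Dα y = Dβ y} f y := by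
    intro y
    rcases hDα01 y with h1 | h1 <;> rcases hDβ01 y with h2 | h2 <;>
      simp [Set.indicator_apply, h1, h2]
  have i1 : Integrable (fun y => f y * (Dα y * Dβ y)) μ := by
    refine hInt.mono ((hf.mul (hDα.mul hDβ)).aestronglyMeasurable) (ae_of_all _ fun y => ?_)
    rcases hDα01 y with h1 | h1 <;> rcases hDβ01 y with h2 | h2 <;> simp [h1, h2]
  have i2 : Integrable (fun y => f y * ((1 - Dα y) * (1 - Dβ y))) μ := by
    refine hInt.mono ((hf.mul ((measurable_const.sub hDα).mul
      (measurable_const.sub hDβ))).aestronglyMeasurable) (ae_of_all _ fun y => ?_)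
    rcases hDα01 y with h1 | h1 <;> rcases hDβ01 y with h2 | h2 <;> simp [h1, h2]
  constructor
  · simp only [key1, key2]
    rw [← integral_add i1 i2]
    rw [integral_congr_ae (ae_of_all _ hsum), integral_indicator hS]
  · constructor
    · intro h
      rw [Filter.EventuallyEq, ae_withDensity_iff hf.ennreal_ofReal]
      filter_upwards [h] with y hy hne
      have hfy : f y ≠ 0 := by
        intro h0
        exact hne (by simp [h0])
      exact mul_left_cancel₀ hfy (congrArg Prod.fst hy)
    · intro h
      rw [Filter.EventuallyEq, ae_withDensity_iff hf.ennreal_ofReal] at h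
      filter_upwards [h] with y hy
      by_cases h0 : f y = 0
      · simp [h0]
      · have hd : Dα y = Dβ y :=
          hy (ENNReal.ofReal_pos.mpr ((hf0 y).lt_of_ne (Ne.symm h0))).ne'
        simp [hd]
end

section
/- Let σ11, σ21, σ22 ∈ R with σ11, σ22 > 0, σ21 < 0, and let y1, y2 ∈ R satisfy σ21 y1 - σ11 y2 > 0 and y1 > 0. Then the set of θ ∈ [-π, π] satisfying the three inequalities σ21 sin θ ≤ σ22 cos θ, cos θ ≥ 0, and σ22 y1 cos θ ≥ (σ21 y1 - σ11 y2) sin θ equals the interval [arctan(σ22/σ21), arctan(σ22 y1/(σ21 y1 - σ11 y2))]. -/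
open Real

theorem conditional_identified_set_for_theta_shock_sign
    (σ11 σ21 σ22 y1 y2 : ℝ)
    (hσ11 : 0 < σ11) (hσ22 : 0 < σ22) (hσ21 : σ21 < 0)
    (hy : 0 < σ21 * y1 - σ11 * y2) (hy1 : 0 < y1) :
    {θ : ℝ | θ ∈ Set.Icc (-π) π ∧ σ21 * Real.sin θ ≤ σ22 * Real.cos θ ∧
        0 ≤ Real.cos θ ∧ (σ21 * y1 - σ11 * y2) * Real.sin θ ≤ σ22 * y1 * Real.cos θ} =
      Set.Icc (arctan (σ22 / σ21)) (arctan (σ22 * y1 / (σ21 * y1 - σ11 * y2))) := by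
  have hpi := Real.pi_pos
  set c := σ21 * y1 - σ11 * y2 with hc
  ext θ
  simp only [Set.mem_setOf_eq, Set.mem_Icc]
  constructor
  · rintro ⟨⟨hθl, hθu⟩, h2, h3, h4⟩
    -- cos θ > 0
    have hcos : 0 < Real.cos θ := by
      rcases lt_or_eq_of_le h3 with h | h
      · exact h
      · exfalso
        have hpyth := Real.sin_sq_add_cos_sq θ
        rw [← h] at h2 h4
        have hs1 : 0 ≤ Real.sin θ := by
          by_contra h'
          push_neg at h'
          nlinarith [mul_pos_of_neg_of_neg hσ21 h']
        have hs2 : Real.sin θ ≤ 0 := by nlinarith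
        nlinarith
    have hθ2 : θ ∈ Set.Ioo (-(π/2)) (π/2) := by
      constructor
      · by_contra hcon
        push_neg at hcon
        have : Real.cos θ ≤ 0 := by
          have := Real.cos_nonpos_of_pi_div_two_le_of_le (x := -θ) (by linarith) (by linarith)
          rwa [Real.cos_neg] at this
        linarith
      · by_contra hcon
        push_neg at hcon
        have : Real.cos θ ≤ 0 :=
          Real.cos_nonpos_of_pi_div_two_le_of_le hcon (by linarith)
        linarith
    have htan : Real.tan θ = Real.sin θ / Real.cos θ := Real.tan_eq_sin_div_cos θ
    have h1 : σ22 / σ21 ≤ Real.tan θ := by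
      rw [div_le_iff_of_neg hσ21, htan, div_mul_eq_mul_div, div_le_iff₀ hcos]
      nlinarith
    have h2' : Real.tan θ ≤ σ22 * y1 / c := by
      rw [le_div_iff₀ hy, htan, div_mul_eq_mul_div, div_le_iff₀ hcos]
      nlinarith
    have heq : arctan (Real.tan θ) = θ := Real.arctan_tan hθ2.1 hθ2.2
    constructor
    · rw [← heq]; exact Real.arctan_strictMono.monotone h1
    · rw [← heq]; exact Real.arctan_strictMono.monotone h2'
  · rintro ⟨hl, hu⟩
    have ha1 : -(π/2) < arctan (σ22 / σ21) := Real.neg_pi_div_two_lt_arctan _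
    have ha2 : arctan (σ22 * y1 / c) < π/2 := Real.arctan_lt_pi_div_two _
    have hθ2 : θ ∈ Set.Ioo (-(π/2)) (π/2) := ⟨lt_of_lt_of_le ha1 hl, lt_of_le_of_lt hu ha2⟩
    have hcos : 0 < Real.cos θ := Real.cos_pos_of_mem_Ioo hθ2
    have hta : σ22 / σ21 ≤ Real.tan θ := by
      have := Real.strictMonoOn_tan.monotoneOn (Real.arctan_mem_Ioo _) hθ2 hl
      rwa [Real.tan_arctan] at this
    have htb : Real.tan θ ≤ σ22 * y1 / c := by
      have := Real.strictMonoOn_tan.monotoneOn hθ2 (Real.arctan_mem_Ioo _) hu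
      rwa [Real.tan_arctan] at this
    have htan : Real.tan θ = Real.sin θ / Real.cos θ := Real.tan_eq_sin_div_cos θ
    rw [div_le_iff_of_neg hσ21, htan, div_mul_eq_mul_div, div_le_iff₀ hcos] at hta
    rw [le_div_iff₀ hy, htan, div_mul_eq_mul_div, div_le_iff₀ hcos] at htb
    refine ⟨⟨by linarith [hθ2.1], by linarith [hθ2.2]⟩, by nlinarith, le_of_lt hcos, by nlinarith⟩
end

section
/- Let C ⊆ R^n be a closed convex cone with nonempty interior, C ≠ R^n, and let S^{n-1} be the unit sphere with n ≥ 2. Then C ∩ S^{n-1} is path-connected. -/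
theorem convex_cone_inter_sphere_pathconnected
    (n : ℕ) (hn : 2 ≤ n) (C : Set (EuclideanSpace ℝ (Fin n)))
    (hclosed : IsClosed C) (hconv : Convex ℝ C)
    (hcone : ∀ c : ℝ, 0 < c → ∀ x ∈ C, c • x ∈ C)
    (hint : (interior C).Nonempty) (hne : C ≠ Set.univ) :
    IsPathConnected (C ∩ Metric.sphere (0 : EuclideanSpace ℝ (Fin n)) 1) := by
  -- 0 is not in the interior of C
  have h0 : (0 : EuclideanSpace ℝ (Fin n)) ∉ interior C := by
    intro h0
    apply hne
    rcases Metric.isOpen_iff.1 isOpen_interior 0 h0 with ⟨ε, hε, hball⟩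
    ext x
    simp only [Set.mem_univ, iff_true]
    by_cases hx : x = 0
    · subst hx
      exact interior_subset h0
    · have hxn : (0:ℝ) < ‖x‖ := norm_pos_iff.2 hx
      have hc : (0:ℝ) < ε / (2 * ‖x‖) := by positivity
      have hmem : (ε / (2 * ‖x‖)) • x ∈ C := by
        apply interior_subset
        apply hball
        simp only [Metric.mem_ball, dist_zero_right, norm_smul, Real.norm_eq_abs,
          abs_of_pos hc]
        have : ε / (2 * ‖x‖) * ‖x‖ = ε / 2 := by field_simp
        rw [this]; linarith
      have := hcone (ε / (2 * ‖x‖))⁻¹ (by positivity) _ hmem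
      rwa [smul_smul, inv_mul_cancel₀ (ne_of_gt hc), one_smul] at this
  obtain ⟨x₀, hx₀⟩ := hint
  have hx₀C : x₀ ∈ C := interior_subset hx₀
  have hx₀0 : x₀ ≠ 0 := fun h => h0 (h ▸ hx₀)
  have hx₀n : (0:ℝ) < ‖x₀‖ := norm_pos_iff.2 hx₀0
  set x₁ : EuclideanSpace ℝ (Fin n) := ‖x₀‖⁻¹ • x₀ with hx₁def
  have hx₁ : x₁ ∈ C ∩ Metric.sphere 0 1 := by
    constructor
    · exact hcone _ (by positivity) _ hx₀C
    · simp [hx₁def, norm_smul, abs_of_pos (inv_pos.2 hx₀n),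
        inv_mul_cancel₀ (ne_of_gt hx₀n)]
  refine ⟨x₁, hx₁, ?_⟩
  rintro y ⟨hyC, hyS⟩
  have hy1 : ‖y‖ = 1 := by simpa using hyS
  have hy0 : y ≠ 0 := by intro h; rw [h] at hy1; simp at hy1
  -- the segment from y to x₀ avoids 0
  set v : ℝ → EuclideanSpace ℝ (Fin n) := fun t => (1 - t) • y + t • x₀ with hvdef
  have hvC : ∀ t ∈ Set.Icc (0:ℝ) 1, v t ∈ C := by
    intro t ht
    exact hconv hyC hx₀C (by linarith [ht.2]) ht.1 (by ring)
  have hvne : ∀ t ∈ Set.Icc (0:ℝ) 1, v t ≠ 0 := by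
    intro t ht hvz
    rcases eq_or_lt_of_le ht.1 with h0t | h0t
    · apply hy0
      have : v 0 = y := by simp [hvdef]
      rw [← h0t] at hvz
      rwa [this] at hvz
    rcases eq_or_lt_of_le ht.2 with ht1 | ht1
    · apply hx₀0
      have : v 1 = x₀ := by simp [hvdef]
      rw [ht1] at hvz
      rwa [this] at hvz
    · -- t ∈ (0,1): v t ∈ interior C
      apply h0
      have := hconv.combo_interior_closure_mem_interior hx₀
        (subset_closure hyC) h0t (show (0:ℝ) ≤ 1 - t by linarith) (by ring)
      rw [← hvz]
      have hcomm : v t = t • x₀ + (1 - t) • y := by rw [hvdef]; ring_nf; abel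
      rw [hcomm]
      exact this
  -- continuity of v and the normalized path
  have hvcont : Continuous v := by
    apply Continuous.add
    · exact (continuous_const.sub continuous_id).smul continuous_const
    · exact continuous_id.smul continuous_const
  have hγcont : Continuous fun t : unitInterval =>
      (‖v t‖⁻¹ : ℝ) • v (t : ℝ) := by
    have hvc : Continuous fun t : unitInterval => v (t : ℝ) :=
      hvcont.comp continuous_subtype_val
    exact ((hvc.norm).inv₀ (fun t => norm_ne_zero_iff.2 (hvne t t.2))).smul hvc
  let γ : Path y x₁ :=
    { toFun := fun t => (‖v t‖⁻¹ : ℝ) • v (t : ℝ)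
      continuous_toFun := hγcont
      source' := by simp [hvdef, hy1]
      target' := by simp [hvdef, hx₁def] }
  have hjoined : JoinedIn (C ∩ Metric.sphere 0 1) y x₁ := by
    refine ⟨γ, fun t => ⟨?_, ?_⟩⟩
    · have hpos : (0:ℝ) < ‖v t‖⁻¹ :=
        inv_pos.2 (norm_pos_iff.2 (hvne t t.2))
      exact hcone _ hpos _ (hvC t t.2)
    · simp only [γ, Path.coe_mk_mk, mem_sphere_iff_norm, sub_zero, norm_smul,
        Real.norm_eq_abs, abs_of_pos (inv_pos.2 (norm_pos_iff.2 (hvne t t.2)))]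
      exact inv_mul_cancel₀ (norm_ne_zero_iff.2 (hvne t t.2))
  exact hjoined.symm
end
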